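/- Support properties of the (A,N) orbital integral: Let f : GL₂(ℂ) → ℂ be continuous and compactly supported. Then: (i) there exists a compact set K ⊆ ℂ ∖ {0} such that M(x, c, f) = 0 for all x ∈ ℂ ∖ {0} whenever c ∉ K; and (ii) there exists R > 0 such that M(x, c, f) = 0 for all c ∈ ℂ ∖ {0} whenever |x| > R. -/

import Mathlib

open MeasureTheory Filter Topology Complex
open scoped ENNReal


/-- The multiplicative Haar measure `d×a = dA(a)/|a|²` on `ℂ ∖ {0}`. -/
noncomputable def mulHaar : Measure ℂ :=
  volume.withDensity fun a => ENNReal.ofReal ((‖a‖ ^ 2)⁻¹)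

/-- `n(x) = [[1, x], [0, 1]]`. -/
def nMat (x : ℂ) : Matrix (Fin 2) (Fin 2) ℂ := !![1, x; 0, 1]

/-- `z(c) = [[c, 0], [0, c]]`. -/
def zMat (c : ℂ) : Matrix (Fin 2) (Fin 2) ℂ := !![c, 0; 0, c]

/-- `s(a) = [[a, 0], [0, 1/a]]`. -/
noncomputable def sMat (a : ℂ) : Matrix (Fin 2) (Fin 2) ℂ := !![a, 0; 0, a⁻¹]

/-- `w₀ = [[0, 1], [1, 0]]`. -/
def w0Mat : Matrix (Fin 2) (Fin 2) ℂ := !![0, 1; 1, 0]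

/-- The `(A,N)` orbital integral
`M(x, c, f) = ∫_{ℂ∖{0}} ∫_ℂ f(s(a) z(c) n(x) w₀ n(y)) dA(y) d×a`. -/
noncomputable def Morb (f : Matrix (Fin 2) (Fin 2) ℂ → ℂ) (x c : ℂ) : ℂ :=
  ∫ a in {(0 : ℂ)}ᶜ, (∫ y : ℂ, f (sMat a * zMat c * nMat x * w0Mat * nMat y)) ∂mulHaar

/-- Explicit form of the product `s(a) z(c) n(x) w₀ n(y)`. -/
lemma orbital_matrix_eq (a c x y : ℂ) :
    (sMat a * zMat c * nMat x * w0Mat * nMat y) =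
      !![a*c*x, a*c*x*y + a*c; a⁻¹*c, a⁻¹*c*y] := by
  ext i j
  fin_cases i <;> fin_cases j <;>
    simp [sMat, zMat, nMat, w0Mat, Matrix.mul_apply, Fin.sum_univ_two]

/-- Determinant of the product. -/
lemma orbital_matrix_det (a c x y : ℂ) (ha : a ≠ 0) :
    (sMat a * zMat c * nMat x * w0Mat * nMat y).det = -(c^2) := by
  rw [orbital_matrix_eq, Matrix.det_fin_two_of]
  field_simp
  ring

/-- If the integrand vanishes identically, so does `Morb`. -/
lemma Morb_eq_zero (f : Matrix (Fin 2) (Fin 2) ℂ → ℂ) (x c : ℂ)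
    (h : ∀ a : ℂ, a ≠ 0 → ∀ y : ℂ, f (sMat a * zMat c * nMat x * w0Mat * nMat y) = 0) :
    Morb f x c = 0 := by
  unfold Morb
  rw [setIntegral_congr_fun (f := fun a => ∫ y : ℂ, f (sMat a * zMat c * nMat x * w0Mat * nMat y))
    (g := fun _ => (0 : ℂ)) (measurableSet_singleton (0:ℂ)).compl ?_, integral_zero]
  intro a ha
  simp only [Set.mem_compl_iff, Set.mem_singleton_iff] at ha
  simp only [h a ha, integral_zero]

/-- **Support properties of the `(A,N)` orbital integral.** (i) There is a compact
`K ⊆ ℂ ∖ {0}` such that `M(x, c, f) = 0` for all `x ≠ 0` whenever `c ∉ K`; (ii) there is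
`R > 0` such that `M(x, c, f) = 0` for all `c ≠ 0` whenever `|x| > R`. -/
theorem AN_orbital_integral_support (f : Matrix (Fin 2) (Fin 2) ℂ → ℂ)
    (hf : Continuous f) (hcs : HasCompactSupport f) (hGL : tsupport f ⊆ {g | g.det ≠ 0}) :
    (∃ K : Set ℂ, IsCompact K ∧ K ⊆ {(0 : ℂ)}ᶜ ∧
      ∀ c : ℂ, c ≠ 0 → c ∉ K → ∀ x : ℂ, x ≠ 0 → Morb f x c = 0) ∧
    (∃ R > (0 : ℝ), ∀ x : ℂ, x ≠ 0 → R < ‖x‖ →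
      ∀ c : ℂ, c ≠ 0 → Morb f x c = 0) := by
  by_cases hS : tsupport f = ∅
  · have hf0 : ∀ g, f g = 0 := by
      intro g
      by_contra h
      have hg : g ∈ tsupport f := subset_tsupport f h
      rw [hS] at hg
      exact hg
    have hM : ∀ x c : ℂ, Morb f x c = 0 := fun x c =>
      Morb_eq_zero f x c (fun a _ y => hf0 _)
    exact ⟨⟨∅, isCompact_empty, by simp, fun c _ _ x _ => hM x c⟩,
      ⟨1, one_pos, fun x _ _ c _ => hM x c⟩⟩
  · have hne : (tsupport f).Nonempty := Set.nonempty_iff_ne_empty.mpr hS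
    have hdetC : Continuous fun g : Matrix (Fin 2) (Fin 2) ℂ => ‖g.det‖ :=
      continuous_norm.comp (Continuous.matrix_det (by fun_prop))
    have hφC : Continuous fun g : Matrix (Fin 2) (Fin 2) ℂ =>
        max (‖g 0 0‖) (‖g 1 0‖) :=
      Continuous.max (continuous_norm.comp (by fun_prop))
        (continuous_norm.comp (by fun_prop))
    obtain ⟨g₁, hg₁S, hmin⟩ := hcs.exists_isMinOn hne hdetC.continuousOn
    obtain ⟨g₂, hg₂S, hmax⟩ := hcs.exists_isMaxOn hne hdetC.continuousOn
    obtain ⟨g₃, hg₃S, hφmax⟩ := hcs.exists_isMaxOn hne hφC.continuousOn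
    set δ : ℝ := ‖g₁.det‖ with hδ
    set Bd : ℝ := ‖g₂.det‖ with hBd
    set B : ℝ := max (‖g₃ 0 0‖) (‖g₃ 1 0‖) with hB
    have hδpos : 0 < δ := by
      have : g₁.det ≠ 0 := hGL hg₁S
      simpa [hδ] using (norm_pos_iff.mpr this)
    have hBnn : 0 ≤ B := le_trans (norm_nonneg _) (le_max_left _ _)
    -- the key compact set and radius
    have hdet_bound : ∀ (a c x y : ℂ), a ≠ 0 →
        f (sMat a * zMat c * nMat x * w0Mat * nMat y) ≠ 0 →
        δ ≤ ‖c‖ ^ 2 ∧ ‖c‖ ^ 2 ≤ Bd := by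
      intro a c x y ha hfne
      have hgS : (sMat a * zMat c * nMat x * w0Mat * nMat y) ∈ tsupport f :=
        subset_tsupport f hfne
      have h1 : δ ≤ ‖(sMat a * zMat c * nMat x * w0Mat * nMat y).det‖ := hmin hgS
      have h2 : ‖(sMat a * zMat c * nMat x * w0Mat * nMat y).det‖ ≤ Bd := hmax hgS
      rw [orbital_matrix_det a c x y ha] at h1 h2
      simp only [norm_neg, norm_pow] at h1 h2
      exact ⟨h1, h2⟩
    constructor
    · -- part (i)
      refine ⟨{c : ℂ | Real.sqrt δ ≤ ‖c‖ ∧ ‖c‖ ≤ Real.sqrt Bd}, ?_, ?_, ?_⟩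
      · apply IsCompact.of_isClosed_subset (isCompact_closedBall (0:ℂ) (Real.sqrt Bd))
        · rw [Set.setOf_and]
          exact IsClosed.inter (isClosed_le continuous_const continuous_norm)
            (isClosed_le continuous_norm continuous_const)
        · intro c hc
          simpa [Metric.mem_closedBall, Complex.dist_eq] using hc.2
      · intro c hc
        simp only [Set.mem_compl_iff, Set.mem_singleton_iff]
        intro h0
        have := hc.1
        rw [h0] at this
        simp only [norm_zero] at this
        exact absurd (le_antisymm this (Real.sqrt_nonneg δ)) (ne_of_gt (Real.sqrt_pos.mpr hδpos))
      · intro c hc0 hcK x hx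
        apply Morb_eq_zero
        intro a ha y
        by_contra hfne
        obtain ⟨h1, h2⟩ := hdet_bound a c x y ha hfne
        apply hcK
        constructor
        · calc Real.sqrt δ ≤ Real.sqrt (‖c‖ ^ 2) := Real.sqrt_le_sqrt h1
            _ = ‖c‖ := Real.sqrt_sq (norm_nonneg c)
        · calc ‖c‖ = Real.sqrt (‖c‖ ^ 2) :=
              (Real.sqrt_sq (norm_nonneg c)).symm
            _ ≤ Real.sqrt Bd := Real.sqrt_le_sqrt h2
    · -- part (ii)
      refine ⟨B ^ 2 / δ + 1, by positivity, ?_⟩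
      intro x hx hR c hc
      apply Morb_eq_zero
      intro a ha y
      by_contra hfne
      have hgS : (sMat a * zMat c * nMat x * w0Mat * nMat y) ∈ tsupport f :=
        subset_tsupport f hfne
      have hφ := hφmax hgS
      rw [orbital_matrix_eq] at hφ
      have h00 : ‖(!![a*c*x, a*c*x*y + a*c; a⁻¹*c, a⁻¹*c*y] : Matrix (Fin 2) (Fin 2) ℂ) 0 0‖ ≤ B :=
        le_trans (le_max_left _ _) hφ
      have h10 : ‖(!![a*c*x, a*c*x*y + a*c; a⁻¹*c, a⁻¹*c*y] : Matrix (Fin 2) (Fin 2) ℂ) 1 0‖ ≤ B :=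
        le_trans (le_max_right _ _) hφ
      simp only [Matrix.cons_val', Matrix.cons_val_zero, Matrix.empty_val',
        Matrix.cons_val_fin_one, Matrix.cons_val_one, Matrix.head_cons, Matrix.head_fin_const,
        Matrix.of_apply] at h00 h10
      have hprod : ‖a * c * x‖ * ‖a⁻¹ * c‖ = ‖c‖ ^ 2 * ‖x‖ := by
        rw [← norm_mul]
        have : a * c * x * (a⁻¹ * c) = c ^ 2 * x := by field_simp
        rw [this, norm_mul, norm_pow]
      have hle : ‖c‖ ^ 2 * ‖x‖ ≤ B ^ 2 := by
        rw [← hprod]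
        exact mul_le_mul h00 h10 (norm_nonneg _) hBnn |>.trans_eq (sq B).symm
      have h1 := (hdet_bound a c x y ha hfne).1
      have hxB : ‖x‖ ≤ B ^ 2 / δ := by
        rw [le_div_iff₀ hδpos]
        calc ‖x‖ * δ ≤ ‖x‖ * (‖c‖ ^ 2) := by
              exact mul_le_mul_of_nonneg_left h1 (norm_nonneg x)
          _ = ‖c‖ ^ 2 * ‖x‖ := mul_comm _ _
          _ ≤ B ^ 2 := hle
      linarith
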